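/- Let K be a closed cone with nonempty interior in a finite dimensional real normed space. If 𝒜 is a bounded, primitive family of continuous, order-preserving, homogeneous maps on K, then the Berger–Wang formula holds: r(𝒜) = r̂(𝒜). -/

import Mathlib

open Filter Topology Set

noncomputable section

/-- A wedge in a real normed space: a convex set closed under positive scalar multiplication. -/
def IsWedge {X : Type*} [NormedAddCommGroup X] [NormedSpace ℝ X] (W : Set X) : Prop :=
  Convex ℝ W ∧ ∀ c : ℝ, 0 < c → ∀ x ∈ W, c • x ∈ W

/-- A closed cone: closed, convex, closed under positive scalar multiplication, K ∩ (−K) = {0}. -/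
def IsClosedCone {X : Type*} [NormedAddCommGroup X] [NormedSpace ℝ X] (K : Set X) : Prop :=
  IsClosed K ∧ Convex ℝ K ∧ (∀ c : ℝ, 0 < c → ∀ x ∈ K, c • x ∈ K) ∧ K ∩ (-K) = {0}

/-- A polyhedral cone: intersection of finitely many closed halfspaces through the origin. -/
def IsPolyhedralCone {X : Type*} [NormedAddCommGroup X] [NormedSpace ℝ X] (K : Set X) : Prop :=
  ∃ (k : ℕ) (φ : Fin k → (X →ₗ[ℝ] ℝ)), K = {x | ∀ i, 0 ≤ φ i x}

/-- `f` maps `W` into itself and is positively homogeneous on `W`. -/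
def HomogOn {X : Type*} [NormedAddCommGroup X] [NormedSpace ℝ X] (f : X → X) (W : Set X) : Prop :=
  Set.MapsTo f W W ∧ ∀ c : ℝ, 0 < c → ∀ x ∈ W, f (c • x) = c • f x

/-- `f` is order-preserving with respect to the order induced by the cone `K`. -/
def OrderPresOn {X : Type*} [NormedAddCommGroup X] [NormedSpace ℝ X] (f : X → X) (K : Set X) : Prop :=
  ∀ x ∈ K, ∀ y ∈ K, y - x ∈ K → f y - f x ∈ K

/-- `f` is subadditive on `K`: f(x+y) ≤ f(x)+f(y) in the cone order. -/
def SubaddOn {X : Type*} [NormedAddCommGroup X] [NormedSpace ℝ X] (f : X → X) (K : Set X) : Prop :=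
  ∀ x ∈ K, ∀ y ∈ K, (f x + f y) - f (x + y) ∈ K

/-- The norm of a homogeneous map on `W`: sup of ‖f x‖ over unit vectors of `W`. -/
def opNormW {X : Type*} [NormedAddCommGroup X] (f : X → X) (W : Set X) : ℝ :=
  sSup ((fun x => ‖f x‖) '' {x ∈ W | ‖x‖ = 1})

/-- A bounded homogeneous map on `W`. -/
def BoundedMapOn {X : Type*} [NormedAddCommGroup X] (f : X → X) (W : Set X) : Prop :=
  ∃ C : ℝ, ∀ x ∈ W, ‖f x‖ ≤ C * ‖x‖

/-- A bounded family of homogeneous maps on `W`. -/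
def BoundedFamOn {X : Type*} [NormedAddCommGroup X] (A : Set (X → X)) (W : Set X) : Prop :=
  ∃ C : ℝ, ∀ f ∈ A, ∀ x ∈ W, ‖f x‖ ≤ C * ‖x‖

/-- `famPow A m` = 𝒜^m, the set of m-fold compositions of maps from `A` (with 𝒜^0 = {id}). -/
def famPow {X : Type*} (A : Set (X → X)) : ℕ → Set (X → X)
  | 0 => {id}
  | m + 1 => {h | ∃ f ∈ A, ∃ g ∈ famPow A m, h = f ∘ g}

/-- The composition of two families of maps. -/
def compFam {X : Type*} (A B : Set (X → X)) : Set (X → X) :=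
  {h | ∃ f ∈ A, ∃ g ∈ B, h = f ∘ g}

/-- The Bonsall cone spectral radius r(f) = inf_{n>0} ‖f^n‖^{1/n}. -/
def coneSpecRad {X : Type*} [NormedAddCommGroup X] (f : X → X) (W : Set X) : ℝ :=
  ⨅ n : ℕ+, (opNormW (f^[(n : ℕ)]) W) ^ (((n : ℕ) : ℝ)⁻¹)

/-- sup_{f ∈ 𝒜^m} ‖f‖^{1/m}. -/
def jointTerm {X : Type*} [NormedAddCommGroup X] (A : Set (X → X)) (W : Set X) (m : ℕ) : ℝ :=
  sSup ((fun f => (opNormW f W) ^ ((m : ℝ)⁻¹)) '' famPow A m)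

/-- sup_{f ∈ 𝒜^m} r(f)^{1/m}. -/
def genTerm {X : Type*} [NormedAddCommGroup X] (A : Set (X → X)) (W : Set X) (m : ℕ) : ℝ :=
  sSup ((fun f => (coneSpecRad f W) ^ ((m : ℝ)⁻¹)) '' famPow A m)

/-- The joint spectral radius r̂(𝒜) = inf_{m>0} sup_{f ∈ 𝒜^m} ‖f‖^{1/m}. -/
def jointRad {X : Type*} [NormedAddCommGroup X] (A : Set (X → X)) (W : Set X) : ℝ :=
  ⨅ m : ℕ+, jointTerm A W (m : ℕ)

/-- The generalized spectral radius r(𝒜) = sup_{m>0} sup_{f ∈ 𝒜^m} r(f)^{1/m}. -/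
def genRad {X : Type*} [NormedAddCommGroup X] (A : Set (X → X)) (W : Set X) : ℝ :=
  ⨆ m : ℕ+, genTerm A W (m : ℕ)

/-- β_m = inf_{f ∈ 𝒜^m} ‖f‖. -/
def subBeta {X : Type*} [NormedAddCommGroup X] (A : Set (X → X)) (W : Set X) (m : ℕ) : ℝ :=
  sInf ((fun f => opNormW f W) '' famPow A m)

/-- γ_m = inf_{f ∈ 𝒜^m} r(f). -/
def subGamma {X : Type*} [NormedAddCommGroup X] (A : Set (X → X)) (W : Set X) (m : ℕ) : ℝ :=
  sInf ((fun f => coneSpecRad f W) '' famPow A m)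

/-- F_m^d = f_m ∘ ⋯ ∘ f_1 for a sequence d of maps. -/
def seqComp {X : Type*} (d : ℕ → X → X) : ℕ → X → X
  | 0 => id
  | m + 1 => d m ∘ seqComp d m

/-- The standard cone ℝⁿ_{≥0}. -/
def stdCone (n : ℕ) : Set (Fin n → ℝ) := {x | ∀ i, 0 ≤ x i}

/-- The closed face F_J of the standard cone. -/
def stdFace {n : ℕ} (J : Set (Fin n)) : Set (Fin n → ℝ) :=
  {x | (∀ i, 0 ≤ x i) ∧ ∀ i ∉ J, x i = 0}

/-- A family of maps on ℝⁿ_{≥0} is irreducible if no non-trivial closed face is invariant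
under every member of the family. -/
def IrreducibleFam {n : ℕ} (A : Set ((Fin n → ℝ) → Fin n → ℝ)) : Prop :=
  ¬ ∃ J : Set (Fin n), J.Nonempty ∧ J ≠ Set.univ ∧ ∀ f ∈ A, Set.MapsTo f (stdFace J) (stdFace J)

section BW

variable {X : Type*} [NormedAddCommGroup X] [NormedSpace ℝ X] {K : Set X} {A : Set (X → X)}

lemma cone_zero (hK : IsClosedCone K) : (0:X) ∈ K := by
  have h : (0:X) ∈ K ∩ (-K) := by rw [hK.2.2.2]; rfl
  exact h.1

lemma cone_smul (hK : IsClosedCone K) {c : ℝ} {x : X} (hc : 0 ≤ c) (hx : x ∈ K) : c • x ∈ K := by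
  rcases hc.lt_or_eq with h | h
  · exact hK.2.2.1 c h x hx
  · rw [← h, zero_smul]; exact cone_zero hK

lemma cone_add (hK : IsClosedCone K) {x y : X} (hx : x ∈ K) (hy : y ∈ K) : x + y ∈ K := by
  have h := hK.2.1 hx hy (by norm_num : (0:ℝ) ≤ 1/2) (by norm_num : (0:ℝ) ≤ 1/2) (by norm_num)
  have h2 := hK.2.2.1 2 two_pos _ h
  have : (2:ℝ) • ((1/2 : ℝ) • x + (1/2 : ℝ) • y) = x + y := by
    rw [smul_add, smul_smul, smul_smul]; norm_num
  rwa [this] at h2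

/-- Good map on the cone with bound B. -/
def GoodB (K : Set X) (f : X → X) (B : ℝ) : Prop :=
  Set.MapsTo f K K ∧ (∀ c : ℝ, 0 < c → ∀ x ∈ K, f (c • x) = c • f x) ∧
    OrderPresOn f K ∧ ContinuousOn f K ∧ ∀ x ∈ K, ‖f x‖ ≤ B * ‖x‖

lemma goodB_zero (hK : IsClosedCone K) {f : X → X} {B : ℝ} (hf : GoodB K f B) : f 0 = 0 := by
  have h := hf.2.1 2 two_pos 0 (cone_zero hK)
  rw [smul_zero, two_smul] at h
  exact (left_eq_add.mp h)

lemma famPow_good (hA : ∀ f ∈ A, ContinuousOn f K ∧ HomogOn f K ∧ OrderPresOn f K)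
    {C₀ : ℝ} (hC₀ : 1 ≤ C₀) (hb : ∀ f ∈ A, ∀ x ∈ K, ‖f x‖ ≤ C₀ * ‖x‖) :
    ∀ m, ∀ f ∈ famPow A m, GoodB K f (C₀ ^ m) := by
  intro m
  induction m with
  | zero =>
    intro f hf
    rw [famPow, Set.mem_singleton_iff] at hf
    subst hf
    refine ⟨Set.mapsTo_id K, fun c hc x hx => rfl, fun x hx y hy h => h, continuousOn_id,
      fun x hx => by simp⟩
  | succ m ih =>
    rintro f ⟨p, hp, q, hq, rfl⟩
    obtain ⟨hqm, hqh, hqo, hqc, hqb⟩ := ih q hq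
    obtain ⟨hpc, ⟨hpm, hph⟩, hpo⟩ := hA p hp
    have hpb := hb p hp
    refine ⟨hpm.comp hqm, ?_, ?_, hpc.comp hqc hqm, ?_⟩
    · intro c hc x hx
      simp only [Function.comp_apply]
      rw [hqh c hc x hx, hph c hc _ (hqm hx)]
    · intro x hx y hy h
      exact hpo _ (hqm hx) _ (hqm hy) (hqo _ hx _ hy h)
    · intro x hx
      calc ‖p (q x)‖ ≤ C₀ * ‖q x‖ := hpb _ (hqm hx)
        _ ≤ C₀ * (C₀ ^ m * ‖x‖) := by
            apply mul_le_mul_of_nonneg_left (hqb x hx) (by linarith)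
        _ = C₀ ^ (m + 1) * ‖x‖ := by rw [pow_succ]; ring

lemma famPow_comp : ∀ (a b : ℕ) (f g : X → X), f ∈ famPow A a → g ∈ famPow A b →
    f ∘ g ∈ famPow A (a + b) := by
  intro a
  induction a with
  | zero =>
    intro b f g hf hg
    rw [famPow, Set.mem_singleton_iff] at hf
    subst hf
    rw [Nat.zero_add]
    exact hg
  | succ a ih =>
    rintro b f g ⟨p, hp, q, hq, rfl⟩ hg
    have : a + 1 + b = (a + b) + 1 := by omega
    rw [this]
    exact ⟨p, hp, q ∘ g, ih b q g hq hg, rfl⟩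

lemma famPow_decomp : ∀ (a b : ℕ) (h : X → X), h ∈ famPow A (a + b) →
    ∃ p ∈ famPow A a, ∃ q ∈ famPow A b, h = p ∘ q := by
  intro a
  induction a with
  | zero =>
    intro b h hh
    rw [Nat.zero_add] at hh
    exact ⟨id, rfl, h, hh, rfl⟩
  | succ a ih =>
    intro b h hh
    have e : a + 1 + b = (a + b) + 1 := by omega
    rw [e] at hh
    obtain ⟨p, hp, q, hq, rfl⟩ := hh
    obtain ⟨p', hp', q', hq', rfl⟩ := ih b q hq
    exact ⟨p ∘ p', ⟨p, hp, p', hp', rfl⟩, q', hq', rfl⟩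

lemma famPow_iterate {f : X → X} {m : ℕ} (hf : f ∈ famPow A m) :
    ∀ k, f^[k] ∈ famPow A (k * m) := by
  intro k
  induction k with
  | zero => rw [Nat.zero_mul]; rfl
  | succ k ih =>
    rw [Function.iterate_succ']
    have e : (k + 1) * m = m + k * m := by ring
    rw [e]
    exact famPow_comp m (k * m) f (f^[k]) hf ih

lemma famPow_nonempty (hA : A.Nonempty) : ∀ m, (famPow A m).Nonempty := by
  intro m
  induction m with
  | zero => exact ⟨id, rfl⟩
  | succ m ih =>
    obtain ⟨f, hf⟩ := hA
    obtain ⟨g, hg⟩ := ih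
    exact ⟨f ∘ g, f, hf, g, hg, rfl⟩

end BW
section BW2
set_option linter.unusedSectionVars false

variable {X : Type*} [NormedAddCommGroup X] [NormedSpace ℝ X] {K : Set X} {A : Set (X → X)}

lemma opNormW_nonneg (f : X → X) : 0 ≤ opNormW f K :=
  Real.sSup_nonneg (by rintro y ⟨x, _, rfl⟩; exact norm_nonneg _)

lemma opNormW_le {f : X → X} {B : ℝ} (hB : 0 ≤ B)
    (h : ∀ x ∈ K, ‖x‖ = 1 → ‖f x‖ ≤ B) : opNormW f K ≤ B :=
  Real.sSup_le (by rintro y ⟨x, ⟨hxK, hx1⟩, rfl⟩; exact h x hxK hx1) hB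

lemma opNormW_bddAbove {f : X → X} {B : ℝ} (h : ∀ x ∈ K, ‖f x‖ ≤ B * ‖x‖) :
    BddAbove ((fun x => ‖f x‖) '' {x ∈ K | ‖x‖ = 1}) := by
  refine ⟨B, ?_⟩
  rintro y ⟨x, ⟨hxK, hx1⟩, rfl⟩
  simpa [hx1] using h x hxK

lemma le_opNormW {f : X → X} {B : ℝ} (h : ∀ x ∈ K, ‖f x‖ ≤ B * ‖x‖)
    {x : X} (hxK : x ∈ K) (hx1 : ‖x‖ = 1) : ‖f x‖ ≤ opNormW f K :=
  le_csSup (opNormW_bddAbove h) ⟨x, ⟨hxK, hx1⟩, rfl⟩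

lemma norm_apply_le_opNormW (hK : IsClosedCone K) {f : X → X} {B : ℝ} (hf : GoodB K f B) :
    ∀ x ∈ K, ‖f x‖ ≤ opNormW f K * ‖x‖ := by
  intro x hx
  rcases eq_or_ne x 0 with rfl | hx0
  · rw [goodB_zero hK hf]; simp
  · have hnx : (0:ℝ) < ‖x‖ := norm_pos_iff.mpr hx0
    set y := ‖x‖⁻¹ • x with hy
    have hyK : y ∈ K := cone_smul hK (by positivity) hx
    have hy1 : ‖y‖ = 1 := by
      rw [hy, norm_smul, norm_inv, norm_norm, inv_mul_cancel₀ hnx.ne']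
    have hfy : f x = ‖x‖ • f y := by
      rw [← hf.2.1 ‖x‖ hnx y hyK, hy, smul_inv_smul₀ hnx.ne']
    rw [hfy, norm_smul, norm_norm, mul_comm]
    exact mul_le_mul_of_nonneg_right (le_opNormW hf.2.2.2.2 hyK hy1) hnx.le

lemma opNormW_comp (hK : IsClosedCone K) {f g : X → X} {B B' : ℝ}
    (hf : GoodB K f B) (hg : GoodB K g B') :
    opNormW (f ∘ g) K ≤ opNormW f K * opNormW g K := by
  refine opNormW_le (mul_nonneg (opNormW_nonneg f) (opNormW_nonneg g)) fun x hxK hx1 => ?_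
  calc ‖(f ∘ g) x‖ = ‖f (g x)‖ := rfl
    _ ≤ opNormW f K * ‖g x‖ := norm_apply_le_opNormW hK hf _ (hg.1 hxK)
    _ ≤ opNormW f K * (opNormW g K * ‖x‖) :=
        mul_le_mul_of_nonneg_left (norm_apply_le_opNormW hK hg x hxK) (opNormW_nonneg f)
    _ = opNormW f K * opNormW g K := by rw [hx1, mul_one]

lemma coneSpecRad_nonneg (f : X → X) : 0 ≤ coneSpecRad f K :=
  le_ciInf fun n => Real.rpow_nonneg (opNormW_nonneg _) _

lemma coneSpecRad_le (f : X → X) (n : ℕ+) :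
    coneSpecRad f K ≤ (opNormW (f^[(n : ℕ)]) K) ^ (((n : ℕ) : ℝ)⁻¹) :=
  ciInf_le ⟨0, by rintro y ⟨n, rfl⟩; exact Real.rpow_nonneg (opNormW_nonneg _) _⟩ n

lemma coneSpecRad_le_opNormW (f : X → X) : coneSpecRad f K ≤ opNormW f K := by
  have h := coneSpecRad_le (K := K) f 1
  simpa using h

end BW2
section BW3
set_option linter.unusedSectionVars false

variable {X : Type*} [NormedAddCommGroup X] [NormedSpace ℝ X] {K : Set X} {A : Set (X → X)}
  {C₀ : ℝ}

lemma opNormW_famPow_le (hC : ∀ m, ∀ f ∈ famPow A m, GoodB K f (C₀ ^ m)) (hC₀ : 1 ≤ C₀)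
    {m : ℕ} {f : X → X} (hf : f ∈ famPow A m) : opNormW f K ≤ C₀ ^ m := by
  refine opNormW_le (by positivity) fun x hx h1 => ?_
  have := (hC m f hf).2.2.2.2 x hx
  rwa [h1, mul_one] at this

lemma jointTerm_nonneg (m : ℕ) : 0 ≤ jointTerm A K m :=
  Real.sSup_nonneg (by rintro y ⟨f, _, rfl⟩; exact Real.rpow_nonneg (opNormW_nonneg _) _)

lemma genTerm_nonneg (m : ℕ) : 0 ≤ genTerm A K m :=
  Real.sSup_nonneg (by rintro y ⟨f, _, rfl⟩; exact Real.rpow_nonneg (coneSpecRad_nonneg _) _)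

lemma jointRad_nonneg : 0 ≤ jointRad A K :=
  le_ciInf fun t => jointTerm_nonneg _

lemma jointRad_le_jointTerm (t : ℕ+) : jointRad A K ≤ jointTerm A K (t : ℕ) :=
  ciInf_le ⟨0, by rintro y ⟨t, rfl⟩; exact jointTerm_nonneg _⟩ t

lemma genTerm_le_C (hC : ∀ m, ∀ f ∈ famPow A m, GoodB K f (C₀ ^ m)) (hC₀ : 1 ≤ C₀)
    {m : ℕ} (hm : m ≠ 0) : genTerm A K m ≤ C₀ := by
  refine Real.sSup_le ?_ (by linarith)
  rintro y ⟨f, hf, rfl⟩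
  have h1 : coneSpecRad f K ≤ C₀ ^ m :=
    (coneSpecRad_le_opNormW f).trans (opNormW_famPow_le hC hC₀ hf)
  calc (coneSpecRad f K) ^ ((m:ℝ)⁻¹) ≤ (C₀ ^ m) ^ ((m:ℝ)⁻¹) :=
        Real.rpow_le_rpow (coneSpecRad_nonneg f) h1 (by positivity)
    _ = C₀ := Real.pow_rpow_inv_natCast (by linarith) hm

lemma le_genTerm (hC : ∀ m, ∀ f ∈ famPow A m, GoodB K f (C₀ ^ m)) (hC₀ : 1 ≤ C₀)
    {m : ℕ} (hm : m ≠ 0) {f : X → X} (hf : f ∈ famPow A m) :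
    (coneSpecRad f K) ^ ((m : ℝ)⁻¹) ≤ genTerm A K m := by
  refine le_csSup ⟨C₀, ?_⟩ ⟨f, hf, rfl⟩
  rintro y ⟨g, hg, rfl⟩
  have h1 : coneSpecRad g K ≤ C₀ ^ m :=
    (coneSpecRad_le_opNormW g).trans (opNormW_famPow_le hC hC₀ hg)
  calc (coneSpecRad g K) ^ ((m:ℝ)⁻¹) ≤ (C₀ ^ m) ^ ((m:ℝ)⁻¹) :=
        Real.rpow_le_rpow (coneSpecRad_nonneg g) h1 (by positivity)
    _ = C₀ := Real.pow_rpow_inv_natCast (by linarith) hm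

lemma genTerm_le_genRad (hC : ∀ m, ∀ f ∈ famPow A m, GoodB K f (C₀ ^ m)) (hC₀ : 1 ≤ C₀)
    (m : ℕ+) : genTerm A K (m : ℕ) ≤ genRad A K :=
  le_ciSup ⟨C₀, by rintro y ⟨t, rfl⟩; exact genTerm_le_C hC hC₀ t.pos.ne'⟩ m

lemma genRad_nonneg (hC : ∀ m, ∀ f ∈ famPow A m, GoodB K f (C₀ ^ m)) (hC₀ : 1 ≤ C₀) :
    0 ≤ genRad A K :=
  (genTerm_nonneg 1).trans (genTerm_le_genRad hC hC₀ 1)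

lemma collatz_wielandt (hK : IsClosedCone K)
    (hC : ∀ m, ∀ f ∈ famPow A m, GoodB K f (C₀ ^ m))
    {u : X} (huK : u ∈ K) (hu0 : u ≠ 0) {N : ℝ} (hN : 1 ≤ N)
    (hnorm : ∀ y z : X, y ∈ K → z - y ∈ K → ‖y‖ ≤ N * ‖z‖)
    {f : X → X} {n : ℕ} (hf : f ∈ famPow A n) {lam : ℝ} (hlam : 0 < lam)
    (hcw : f u - lam • u ∈ K) : lam / N ≤ coneSpecRad f K := by
  have hgood := hC n f hf
  have hNpos : (0:ℝ) < N := by linarith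
  have hnu : (0:ℝ) < ‖u‖ := norm_pos_iff.mpr hu0
  have iter : ∀ k : ℕ, f^[k] u - lam ^ k • u ∈ K := by
    intro k
    induction k with
    | zero => simpa using cone_zero hK
    | succ k ih =>
      have hkmem : f^[k] u ∈ K := (hC _ _ (famPow_iterate hf k)).1 huK
      have hlamk : (0:ℝ) < lam ^ k := pow_pos hlam k
      have h1 : f (f^[k] u) - f (lam ^ k • u) ∈ K :=
        hgood.2.2.1 _ (cone_smul hK hlamk.le huK) _ hkmem ih
      have h2 : f (lam ^ k • u) = lam ^ k • f u := hgood.2.1 _ hlamk u huK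
      have h3 : lam ^ k • (f u - lam • u) ∈ K := cone_smul hK hlamk.le hcw
      rw [Function.iterate_succ_apply']
      have e : f (f^[k] u) - lam ^ (k+1) • u
          = (f (f^[k] u) - lam ^ k • f u) + lam ^ k • (f u - lam • u) := by
        rw [smul_sub, smul_smul, ← pow_succ]; abel
      rw [e]
      exact cone_add hK (h2 ▸ h1) h3
  refine le_ciInf fun k => ?_
  have hku := hC _ _ (famPow_iterate hf (k : ℕ))
  have hsm : lam ^ (k:ℕ) • u ∈ K := cone_smul hK (pow_pos hlam _).le huK
  have h1 : lam ^ (k:ℕ) * ‖u‖ ≤ N * ‖f^[(k:ℕ)] u‖ := by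
    have := hnorm _ _ hsm (iter (k:ℕ))
    rwa [norm_smul, Real.norm_eq_abs, abs_of_pos (pow_pos hlam _)] at this
  have h2 : ‖f^[(k:ℕ)] u‖ ≤ opNormW (f^[(k:ℕ)]) K * ‖u‖ :=
    norm_apply_le_opNormW hK hku u huK
  have h3 : lam ^ (k:ℕ) ≤ N * opNormW (f^[(k:ℕ)]) K := by
    have h4 : lam ^ (k:ℕ) * ‖u‖ ≤ N * opNormW (f^[(k:ℕ)]) K * ‖u‖ := by
      calc lam ^ (k:ℕ) * ‖u‖ ≤ N * ‖f^[(k:ℕ)] u‖ := h1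
        _ ≤ N * (opNormW (f^[(k:ℕ)]) K * ‖u‖) := mul_le_mul_of_nonneg_left h2 hNpos.le
        _ = N * opNormW (f^[(k:ℕ)]) K * ‖u‖ := by ring
    exact le_of_mul_le_mul_right h4 hnu
  have hNk : N ≤ N ^ (k:ℕ) := le_self_pow₀ hN k.pos.ne'
  have h4 : (lam / N) ^ (k:ℕ) ≤ opNormW (f^[(k:ℕ)]) K := by
    rw [div_pow, div_le_iff₀ (by positivity)]
    calc lam ^ (k:ℕ) ≤ N * opNormW (f^[(k:ℕ)]) K := h3
      _ ≤ N ^ (k:ℕ) * opNormW (f^[(k:ℕ)]) K :=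
          mul_le_mul_of_nonneg_right hNk (opNormW_nonneg _)
      _ = opNormW (f^[(k:ℕ)]) K * N ^ (k:ℕ) := mul_comm _ _
  calc lam / N = (((lam / N) ^ (k:ℕ)) ^ (((k:ℕ):ℝ)⁻¹)) :=
        (Real.pow_rpow_inv_natCast (div_nonneg hlam.le hNpos.le) k.pos.ne').symm
    _ ≤ (opNormW (f^[(k:ℕ)]) K) ^ (((k:ℕ):ℝ)⁻¹) :=
        Real.rpow_le_rpow (by positivity) h4 (by positivity)

end BW3
section BW4
set_option linter.unusedSectionVars false

variable {X : Type*} [NormedAddCommGroup X] [NormedSpace ℝ X] {K : Set X} {A : Set (X → X)}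
  {C₀ : ℝ}

lemma cone_normal [FiniteDimensional ℝ X] (hK : IsClosedCone K) :
    ∃ N : ℝ, 1 ≤ N ∧ ∀ y z : X, y ∈ K → z - y ∈ K → ‖y‖ ≤ N * ‖z‖ := by
  by_contra hcon
  push_neg at hcon
  have H : ∀ n : ℕ, ∃ y z : X, y ∈ K ∧ z - y ∈ K ∧ ((n:ℝ)+1) * ‖z‖ < ‖y‖ := by
    intro n
    obtain ⟨y, z, hy, hzy, hlt⟩ := hcon ((n:ℝ)+1) (by have := Nat.cast_nonneg (α := ℝ) n; linarith)
    exact ⟨y, z, hy, hzy, hlt⟩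
  choose y z hyK hzy hlt using H
  have hy0 : ∀ n, (0:ℝ) < ‖y n‖ := by
    intro n
    have h0 : (0:ℝ) ≤ ((n:ℝ)+1) * ‖z n‖ := by positivity
    linarith [hlt n]
  set Y : ℕ → X := fun n => ‖y n‖⁻¹ • y n with hY
  set Z : ℕ → X := fun n => ‖y n‖⁻¹ • z n with hZ
  have hYS : ∀ n, Y n ∈ {x ∈ K | ‖x‖ = 1} := by
    intro n
    refine ⟨cone_smul hK (by positivity) (hyK n), ?_⟩
    rw [hY]
    simp only
    rw [norm_smul, norm_inv, norm_norm, inv_mul_cancel₀ (hy0 n).ne']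
  have hZY : ∀ n, Z n - Y n ∈ K := by
    intro n
    have : Z n - Y n = ‖y n‖⁻¹ • (z n - y n) := by rw [smul_sub]
    rw [this]
    exact cone_smul hK (by positivity) (hzy n)
  have hZnorm : ∀ n, ‖Z n‖ ≤ ((n:ℝ)+1)⁻¹ := by
    intro n
    have hc : (0:ℝ) < (n:ℝ)+1 := by positivity
    rw [hZ]
    simp only
    rw [norm_smul, norm_inv, norm_norm, inv_mul_eq_div, div_le_iff₀ (hy0 n), inv_mul_eq_div,
      le_div_iff₀ hc]
    nlinarith [hlt n]
  have hSc : IsCompact {x ∈ K | ‖x‖ = 1} := by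
    have he : {x ∈ K | ‖x‖ = 1} = K ∩ Metric.sphere (0:X) 1 := by
      ext x; simp [mem_sphere_zero_iff_norm]
    rw [he]
    exact (isCompact_sphere (0:X) 1).inter_left hK.1
  obtain ⟨a, haS, φ, hφ, hconv⟩ := hSc.tendsto_subseq hYS
  have hZφ : Tendsto (fun k => Z (φ k)) atTop (𝓝 0) := by
    refine squeeze_zero_norm (fun k => ?_) (by simpa [one_div] using tendsto_one_div_add_atTop_nhds_zero_nat)
    refine (hZnorm (φ k)).trans ?_
    have h1 : (k:ℝ) + 1 ≤ (φ k : ℝ) + 1 := by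
      have h2 : k ≤ φ k := hφ.le_apply
      have : (k:ℝ) ≤ (φ k : ℝ) := by exact_mod_cast h2
      linarith
    exact (one_div ((k:ℝ) + 1)).symm ▸ inv_anti₀ (by positivity) h1
  have htend : Tendsto (fun k => Z (φ k) - Y (φ k)) atTop (𝓝 (0 - a)) := hZφ.sub hconv
  have hma : (0:X) - a ∈ K :=
    hK.1.mem_of_tendsto htend (Eventually.of_forall fun k => hZY (φ k))
  have ha : a ∈ K ∩ (-K) := ⟨haS.1, by rw [Set.mem_neg]; simpa using hma⟩
  rw [hK.2.2.2] at ha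
  have : ‖a‖ = 1 := haS.2
  rw [ha] at this
  simp at this

lemma opNormW_blocks (hK : IsClosedCone K)
    (hC : ∀ m, ∀ f ∈ famPow A m, GoodB K f (C₀ ^ m)) (hC₀ : 1 ≤ C₀)
    {t : ℕ} (ht : t ≠ 0) :
    ∀ k (h : X → X), h ∈ famPow A (k * t) → opNormW h K ≤ ((jointTerm A K t) ^ t) ^ k := by
  have hJ : ∀ g ∈ famPow A t, opNormW g K ≤ (jointTerm A K t) ^ t := by
    intro g hg
    have h1 : (opNormW g K) ^ ((t:ℝ)⁻¹) ≤ jointTerm A K t := by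
      refine le_csSup ⟨C₀, ?_⟩ ⟨g, hg, rfl⟩
      rintro w ⟨p, hp, rfl⟩
      calc (opNormW p K) ^ ((t:ℝ)⁻¹) ≤ (C₀ ^ t) ^ ((t:ℝ)⁻¹) :=
          Real.rpow_le_rpow (opNormW_nonneg _) (opNormW_famPow_le hC hC₀ hp) (by positivity)
        _ = C₀ := Real.pow_rpow_inv_natCast (by linarith) ht
    calc opNormW g K = ((opNormW g K) ^ ((t:ℝ)⁻¹)) ^ t :=
        (Real.rpow_inv_natCast_pow (opNormW_nonneg g) ht).symm
      _ ≤ (jointTerm A K t) ^ t :=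
        pow_le_pow_left₀ (Real.rpow_nonneg (opNormW_nonneg g) _) h1 t
  intro k
  induction k with
  | zero =>
    intro h hh
    rw [Nat.zero_mul] at hh
    rw [famPow, Set.mem_singleton_iff] at hh
    subst hh
    rw [pow_zero]
    exact opNormW_le zero_le_one fun x hx h1 => by simpa using h1.le
  | succ k ih =>
    intro h hh
    have e : (k + 1) * t = t + k * t := by ring
    rw [e] at hh
    obtain ⟨p, hp, q, hq, rfl⟩ := famPow_decomp t (k * t) h hh
    calc opNormW (p ∘ q) K ≤ opNormW p K * opNormW q K :=
        opNormW_comp hK (hC t p hp) (hC (k*t) q hq)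
      _ ≤ (jointTerm A K t) ^ t * ((jointTerm A K t) ^ t) ^ k :=
        mul_le_mul (hJ p hp) (ih q hq) (opNormW_nonneg q)
          (pow_nonneg (jointTerm_nonneg t) t)
      _ = ((jointTerm A K t) ^ t) ^ (k + 1) := (pow_succ' _ _).symm

lemma genRad_le_jointRad (hK : IsClosedCone K)
    (hC : ∀ m, ∀ f ∈ famPow A m, GoodB K f (C₀ ^ m)) (hC₀ : 1 ≤ C₀) :
    genRad A K ≤ jointRad A K := by
  refine ciSup_le fun m => ?_
  refine Real.sSup_le ?_ jointRad_nonneg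
  rintro w ⟨f, hf, rfl⟩
  refine le_ciInf fun t => ?_
  set Jt := jointTerm A K (t:ℕ) with hJt
  have hit : f^[(t:ℕ)] ∈ famPow A ((t:ℕ) * (m:ℕ)) := famPow_iterate hf (t:ℕ)
  have hit' : f^[(t:ℕ)] ∈ famPow A ((m:ℕ) * (t:ℕ)) := by rwa [mul_comm] at hit
  have hb : opNormW (f^[(t:ℕ)]) K ≤ (Jt ^ (t:ℕ)) ^ (m:ℕ) :=
    opNormW_blocks hK hC hC₀ t.pos.ne' (m:ℕ) _ hit'
  have h1 : coneSpecRad f K ≤ Jt ^ (m:ℕ) := by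
    calc coneSpecRad f K ≤ (opNormW (f^[(t:ℕ)]) K) ^ (((t:ℕ):ℝ)⁻¹) := coneSpecRad_le f t
      _ ≤ ((Jt ^ (t:ℕ)) ^ (m:ℕ)) ^ (((t:ℕ):ℝ)⁻¹) :=
        Real.rpow_le_rpow (opNormW_nonneg _) hb (by positivity)
      _ = Jt ^ (m:ℕ) := by
        rw [← pow_mul, mul_comm (t:ℕ) (m:ℕ), pow_mul]
        exact Real.pow_rpow_inv_natCast (pow_nonneg (jointTerm_nonneg _) _) t.pos.ne'
  calc (coneSpecRad f K) ^ (((m:ℕ):ℝ)⁻¹) ≤ (Jt ^ (m:ℕ)) ^ (((m:ℕ):ℝ)⁻¹) :=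
      Real.rpow_le_rpow (coneSpecRad_nonneg f) h1 (by positivity)
    _ = Jt := Real.pow_rpow_inv_natCast (jointTerm_nonneg _) m.pos.ne'

end BW4

theorem statement13 {X : Type*} [NormedAddCommGroup X] [NormedSpace ℝ X]
    [FiniteDimensional ℝ X]
    (K : Set X) (hK : IsClosedCone K) (hint : (interior K).Nonempty)
    (A : Set (X → X))
    (hA : ∀ f ∈ A, ContinuousOn f K ∧ HomogOn f K ∧ OrderPresOn f K)
    (hbdd : BoundedFamOn A K)
    (hprim : ∀ x ∈ K, x ≠ 0 → ∃ m : ℕ, 0 < m ∧ ∃ f ∈ famPow A m, f x ∈ interior K) :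
    genRad A K = jointRad A K := by
  rcases subsingleton_or_nontrivial X with hX | hX
  · -- trivial space: both sides are 0
    have hempty : {x ∈ K | ‖x‖ = 1} = (∅ : Set X) := by
      ext x
      simp only [Set.mem_setOf_eq, Set.mem_empty_iff_false, iff_false, not_and]
      intro _
      have hx : x = 0 := Subsingleton.elim x 0
      rw [hx, norm_zero]
      norm_num
    have hop : ∀ f : X → X, opNormW f K = 0 := fun f => by
      rw [opNormW, hempty, Set.image_empty, Real.sSup_empty]
    have hcsr : ∀ f : X → X, coneSpecRad f K = 0 := fun f => by
      have h1 : ∀ n : ℕ+, (opNormW (f^[(n:ℕ)]) K) ^ (((n:ℕ):ℝ)⁻¹) = 0 := fun n => by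
        rw [hop, Real.zero_rpow]
        exact (inv_pos.mpr (by exact_mod_cast n.pos : (0:ℝ) < ((n:ℕ):ℝ))).ne'
      calc coneSpecRad f K = ⨅ _ : ℕ+, (0:ℝ) := iInf_congr h1
        _ = 0 := ciInf_const
    have hgt : ∀ m : ℕ+, genTerm A K (m:ℕ) = 0 := fun m => by
      refine le_antisymm (Real.sSup_le ?_ le_rfl) (genTerm_nonneg _)
      rintro w ⟨f, _, rfl⟩
      dsimp only
      rw [hcsr, Real.zero_rpow
        (inv_pos.mpr (by exact_mod_cast m.pos : (0:ℝ) < ((m:ℕ):ℝ))).ne']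
    have hjt : ∀ m : ℕ+, jointTerm A K (m:ℕ) = 0 := fun m => by
      refine le_antisymm (Real.sSup_le ?_ le_rfl) (jointTerm_nonneg _)
      rintro w ⟨f, _, rfl⟩
      dsimp only
      rw [hop, Real.zero_rpow
        (inv_pos.mpr (by exact_mod_cast m.pos : (0:ℝ) < ((m:ℕ):ℝ))).ne']
    show (⨆ m : ℕ+, genTerm A K (m:ℕ)) = ⨅ m : ℕ+, jointTerm A K (m:ℕ)
    calc (⨆ m : ℕ+, genTerm A K (m:ℕ)) = ⨆ _ : ℕ+, (0:ℝ) := iSup_congr hgt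
      _ = 0 := ciSup_const
      _ = ⨅ _ : ℕ+, (0:ℝ) := ciInf_const.symm
      _ = ⨅ m : ℕ+, jointTerm A K (m:ℕ) := (iInf_congr hjt).symm
  · -- nontrivial space
    obtain ⟨u, hu⟩ := hint
    have huK : u ∈ K := interior_subset hu
    have hu0 : u ≠ 0 := by
      rintro rfl
      obtain ⟨ρ, hρ, hball⟩ := Metric.isOpen_iff.mp isOpen_interior 0 hu
      obtain ⟨v, hv0⟩ := exists_ne (0:X)
      have hnv : (0:ℝ) < ‖v‖ := norm_pos_iff.mpr hv0
      set w := (ρ / (2*‖v‖)) • v with hw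
      have hwnorm : ‖w‖ < ρ := by
        rw [hw, norm_smul, Real.norm_eq_abs, abs_of_pos (by positivity)]
        have he : ρ / (2*‖v‖) * ‖v‖ = ρ/2 := by field_simp
        rw [he]; linarith
      have hwK : w ∈ K := interior_subset (hball (by rwa [Metric.mem_ball, dist_zero_right]))
      have hmwK : -w ∈ K := interior_subset (hball (by
        rwa [Metric.mem_ball, dist_zero_right, norm_neg]))
      have : w ∈ K ∩ (-K) := ⟨hwK, by rwa [Set.mem_neg]⟩
      rw [hK.2.2.2] at this
      have hw0 : w ≠ 0 := smul_ne_zero (by positivity) hv0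
      exact hw0 this
    have hnu : (0:ℝ) < ‖u‖ := norm_pos_iff.mpr hu0
    obtain ⟨ρ, hρpos, hball⟩ := Metric.isOpen_iff.mp isOpen_interior u hu
    have hballK : Metric.ball u ρ ⊆ K := hball.trans interior_subset
    obtain ⟨C, hCb⟩ := hbdd
    set C₀ := max C 1 with hC₀def
    have hC₀ : 1 ≤ C₀ := le_max_right _ _
    have hb : ∀ f ∈ A, ∀ x ∈ K, ‖f x‖ ≤ C₀ * ‖x‖ := fun f hf x hx =>
      (hCb f hf x hx).trans (mul_le_mul_of_nonneg_right (le_max_left _ _) (norm_nonneg _))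
    have hC := famPow_good hA hC₀ hb
    obtain ⟨N, hN1, hnorm⟩ := cone_normal hK
    have hNpos : (0:ℝ) < N := lt_of_lt_of_le one_pos hN1
    set M := 2 / ρ with hM
    have hMpos : (0:ℝ) < M := by positivity
    have hdom : ∀ x ∈ K, (M * ‖x‖) • u - x ∈ K := by
      intro x hx
      rcases eq_or_ne x 0 with rfl | hx0
      · simpa using cone_zero hK
      · have hnx : (0:ℝ) < ‖x‖ := norm_pos_iff.mpr hx0
        have hv : u - (ρ / (2 * ‖x‖)) • x ∈ K := by
          apply hballK
          rw [Metric.mem_ball, dist_eq_norm]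
          have e : u - (ρ / (2*‖x‖)) • x - u = -((ρ/(2*‖x‖)) • x) := by abel
          rw [e, norm_neg, norm_smul, Real.norm_eq_abs, abs_of_pos (by positivity)]
          have he : ρ / (2*‖x‖) * ‖x‖ = ρ/2 := by field_simp
          rw [he]; linarith
        have h2 : ((2*‖x‖)/ρ) • (u - (ρ/(2*‖x‖)) • x) ∈ K := cone_smul hK (by positivity) hv
        have he : ((2*‖x‖)/ρ) • (u - (ρ/(2*‖x‖)) • x) = (M*‖x‖) • u - x := by
          rw [smul_sub, smul_smul]
          have e1 : (2*‖x‖)/ρ = M * ‖x‖ := by rw [hM]; ring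
          have e2 : (2*‖x‖)/ρ * (ρ/(2*‖x‖)) = 1 := by field_simp
          rw [e2, e1, one_smul]
        rwa [he] at h2
    -- uniform primitivity
    have hunif : ∃ (M₀ : ℕ) (δ : ℝ), 0 < δ ∧ ∀ x ∈ K, ‖x‖ = 1 →
        ∃ m ≤ M₀, ∃ g ∈ famPow A m, g x - δ • u ∈ K := by
      set S := {x ∈ K | ‖x‖ = 1} with hS
      have hSc : IsCompact S := by
        have he : S = K ∩ Metric.sphere (0:X) 1 := by
          ext x; simp [hS, mem_sphere_zero_iff_norm]
        rw [he]; exact (isCompact_sphere (0:X) 1).inter_left hK.1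
      have hdata : ∀ x : S, ∃ (m : ℕ) (g : X → X) (ε : ℝ) (U : Set X),
          0 < ε ∧ g ∈ famPow A m ∧ IsOpen U ∧ (x:X) ∈ U ∧
          ∀ y ∈ U ∩ K, g y - ε • u ∈ K := by
        rintro ⟨x, hxK, hx1⟩
        have hx0 : x ≠ 0 := fun h => by rw [h, norm_zero] at hx1; norm_num at hx1
        obtain ⟨m, _, g, hg, hgx⟩ := hprim x hxK hx0
        obtain ⟨ρ', hρ'pos, hball'⟩ := Metric.isOpen_iff.mp isOpen_interior _ hgx
        set ε := ρ' / (2 * ‖u‖) with hε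
        have hεpos : 0 < ε := div_pos hρ'pos (mul_pos two_pos hnu)
        have hgxε : g x - ε • u ∈ interior K := by
          apply hball'
          rw [Metric.mem_ball, dist_eq_norm]
          have e : g x - ε • u - g x = -(ε • u) := by abel
          rw [e, norm_neg, norm_smul, Real.norm_eq_abs, abs_of_pos hεpos, hε]
          have he : ρ' / (2*‖u‖) * ‖u‖ = ρ'/2 := by field_simp
          rw [he]; linarith
        set O := {y : X | y - ε • u ∈ interior K} with hO
        have hOopen : IsOpen O := by
          have he : O = (fun y : X => y - ε • u) ⁻¹' (interior K) := rfl
          rw [he]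
          exact isOpen_interior.preimage (continuous_id.sub continuous_const)
        have hgc : ContinuousWithinAt g K x := ((hC m g hg).2.2.2.1).continuousWithinAt hxK
        have hpre : g ⁻¹' O ∈ 𝓝[K] x := hgc (hOopen.mem_nhds hgxε)
        obtain ⟨U, hUopen, hxU, hUsub⟩ := mem_nhdsWithin.mp hpre
        refine ⟨m, g, ε, U, hεpos, hg, hUopen, hxU, fun y hy => ?_⟩
        exact interior_subset (hUsub ⟨hy.1, hy.2⟩)
      choose md gd εd Ud hεd hgd hUopen hxU hUprop using hdata
      have hcover : S ⊆ ⋃ x : S, Ud x := fun y hy => Set.mem_iUnion.mpr ⟨⟨y, hy⟩, hxU ⟨y, hy⟩⟩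
      obtain ⟨t, hts⟩ := hSc.elim_finite_subcover Ud hUopen hcover
      have hSne : (‖u‖⁻¹ • u) ∈ S := by
        refine ⟨cone_smul hK (by positivity) huK, ?_⟩
        rw [norm_smul, norm_inv, norm_norm, inv_mul_cancel₀ hnu.ne']
      have htne : t.Nonempty := by
        by_contra hte
        rw [Finset.not_nonempty_iff_eq_empty] at hte
        have h := hts hSne
        rw [hte] at h
        simp at h
      refine ⟨t.sup md, t.inf' htne εd, ?_, ?_⟩
      · rw [Finset.lt_inf'_iff]
        exact fun i _ => hεd i
      · intro x hxK hx1
        have hxS : x ∈ S := ⟨hxK, hx1⟩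
        obtain ⟨i, hit, hxUi⟩ := Set.mem_iUnion₂.mp (hts hxS)
        refine ⟨md i, Finset.le_sup hit, gd i, hgd i, ?_⟩
        have h1 := hUprop i x ⟨hxUi, hxK⟩
        have hδle : t.inf' htne εd ≤ εd i := Finset.inf'_le _ hit
        have e : gd i x - (t.inf' htne εd) • u
            = (gd i x - εd i • u) + (εd i - t.inf' htne εd) • u := by
          rw [sub_smul]; abel
        rw [e]
        exact cone_add hK h1 (cone_smul hK (by linarith) huK)
    obtain ⟨M₀, δ, hδpos, hunif'⟩ := hunif
    set r := genRad A K with hr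
    have hr0 : 0 ≤ r := genRad_nonneg hC hC₀
    set C₂ := N * (max r 1) ^ M₀ / δ with hC₂
    have hC₂0 : 0 ≤ C₂ :=
      div_nonneg (mul_nonneg hNpos.le
        (pow_nonneg (le_trans zero_le_one (le_max_right r 1)) M₀)) hδpos.le
    have key : ∀ n : ℕ, n ≠ 0 → ∀ f ∈ famPow A n, ‖f u‖ ≤ C₂ * r ^ n := by
      intro n hn f hf
      rcases eq_or_ne (f u) 0 with h0 | h0
      · rw [h0, norm_zero]
        exact mul_nonneg hC₂0 (pow_nonneg hr0 n)
      · set R := ‖f u‖ with hR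
        have hRpos : 0 < R := norm_pos_iff.mpr h0
        have hfuK : f u ∈ K := (hC n f hf).1 huK
        set x := R⁻¹ • f u with hx
        have hxK : x ∈ K := cone_smul hK (by positivity) hfuK
        have hx1 : ‖x‖ = 1 := by
          rw [hx, norm_smul, norm_inv, norm_norm, inv_mul_cancel₀ hRpos.ne']
        obtain ⟨m, hmle, g, hg, hgx⟩ := hunif' x hxK hx1
        have hh : g ∘ f ∈ famPow A (m + n) := famPow_comp m n g f hg hf
        have hgfu : (g ∘ f) u = R • g x := by
          have hfu : f u = R • x := by rw [hx, smul_inv_smul₀ hRpos.ne']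
          simp only [Function.comp_apply]
          rw [hfu, (hC m g hg).2.1 R hRpos x hxK]
        have hcw : (g ∘ f) u - (R * δ) • u ∈ K := by
          rw [hgfu]
          have e : R • g x - (R*δ) • u = R • (g x - δ • u) := by
            rw [smul_sub, smul_smul]
          rw [e]
          exact cone_smul hK hRpos.le hgx
        have hlam : 0 < R * δ := mul_pos hRpos hδpos
        have hcsr : R * δ / N ≤ coneSpecRad (g ∘ f) K :=
          collatz_wielandt hK hC huK hu0 hN1 hnorm hh hlam hcw
        have hmn : m + n ≠ 0 := by omega
        have h2 : (coneSpecRad (g ∘ f) K) ^ (((m+n:ℕ):ℝ)⁻¹) ≤ r := by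
          refine (le_genTerm hC hC₀ hmn hh).trans ?_
          exact genTerm_le_genRad hC hC₀ ⟨m+n, Nat.pos_of_ne_zero hmn⟩
        have hnn : 0 ≤ coneSpecRad (g ∘ f) K := coneSpecRad_nonneg _
        have h3 : coneSpecRad (g ∘ f) K ≤ r ^ (m+n) := by
          have h4 : ((coneSpecRad (g ∘ f) K) ^ (((m+n:ℕ):ℝ)⁻¹)) ^ (m+n) ≤ r ^ (m+n) :=
            pow_le_pow_left₀ (Real.rpow_nonneg hnn _) h2 _
          rwa [Real.rpow_inv_natCast_pow hnn hmn] at h4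
        have h5 : r ^ (m+n) ≤ (max r 1) ^ M₀ * r ^ n := by
          rw [pow_add]
          refine mul_le_mul_of_nonneg_right ?_ (pow_nonneg hr0 n)
          calc r ^ m ≤ (max r 1) ^ m := pow_le_pow_left₀ hr0 (le_max_left _ _) m
            _ ≤ (max r 1) ^ M₀ := pow_le_pow_right₀ (le_max_right _ _) hmle
        have h6 : R * δ / N ≤ (max r 1) ^ M₀ * r ^ n := (hcsr.trans h3).trans h5
        have h6' : R * δ ≤ N * ((max r 1) ^ M₀ * r ^ n) := by
          rw [div_le_iff₀ hNpos] at h6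
          linarith
        calc R ≤ N * ((max r 1) ^ M₀ * r ^ n) / δ := by
              rw [le_div_iff₀ hδpos]; exact h6'
          _ = C₂ * r ^ n := by rw [hC₂]; ring
    have key2 : ∀ n : ℕ, n ≠ 0 → ∀ f ∈ famPow A n,
        opNormW f K ≤ (N * M * C₂) * r ^ n := by
      intro n hn f hf
      have hE0 : (0:ℝ) ≤ N * M * C₂ * r ^ n :=
        mul_nonneg (mul_nonneg (mul_nonneg hNpos.le hMpos.le) hC₂0) (pow_nonneg hr0 n)
      refine opNormW_le hE0 fun x hxK hx1 => ?_
      have hy : (M * ‖x‖) • u - x ∈ K := hdom x hxK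
      have hyK : (M * ‖x‖) • u ∈ K := cone_smul hK (by positivity) huK
      have hMx : 0 < M * ‖x‖ := by rw [hx1, mul_one]; exact hMpos
      have h1 : f ((M*‖x‖) • u) - f x ∈ K := (hC n f hf).2.2.1 x hxK _ hyK hy
      have h2 : f ((M*‖x‖) • u) = (M*‖x‖) • f u := (hC n f hf).2.1 _ hMx u huK
      have h3 : ‖f x‖ ≤ N * ‖f ((M*‖x‖) • u)‖ := hnorm _ _ ((hC n f hf).1 hxK) h1
      rw [h2, norm_smul, Real.norm_eq_abs, abs_of_pos hMx, hx1, mul_one] at h3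
      calc ‖f x‖ ≤ N * (M * ‖f u‖) := h3
        _ ≤ N * (M * (C₂ * r ^ n)) := by
            refine mul_le_mul_of_nonneg_left ?_ hNpos.le
            exact mul_le_mul_of_nonneg_left (key n hn f hf) hMpos.le
        _ = N * M * C₂ * r ^ n := by ring
    set D := max (N*M*C₂) 1 with hD
    have hD1 : (1:ℝ) ≤ D := le_max_right _ _
    have hDpos : (0:ℝ) < D := lt_of_lt_of_le one_pos hD1
    have hjt : ∀ n : ℕ+, jointTerm A K (n:ℕ) ≤ D ^ (((n:ℕ):ℝ)⁻¹) * r := by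
      intro n
      refine Real.sSup_le ?_ (mul_nonneg (Real.rpow_nonneg hDpos.le _) hr0)
      rintro w ⟨f, hf, rfl⟩
      have h1 : opNormW f K ≤ D * r ^ (n:ℕ) :=
        (key2 (n:ℕ) n.pos.ne' f hf).trans
          (mul_le_mul_of_nonneg_right (le_max_left _ _) (pow_nonneg hr0 _))
      calc (opNormW f K) ^ (((n:ℕ):ℝ)⁻¹) ≤ (D * r ^ (n:ℕ)) ^ (((n:ℕ):ℝ)⁻¹) :=
          Real.rpow_le_rpow (opNormW_nonneg f) h1 (by positivity)
        _ = D ^ (((n:ℕ):ℝ)⁻¹) * (r ^ (n:ℕ)) ^ (((n:ℕ):ℝ)⁻¹) :=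
          Real.mul_rpow hDpos.le (pow_nonneg hr0 _)
        _ = D ^ (((n:ℕ):ℝ)⁻¹) * r := by
          rw [Real.pow_rpow_inv_natCast hr0 n.pos.ne']
    have htendD : Tendsto (fun n : ℕ => D ^ ((n:ℝ)⁻¹) * r) atTop (𝓝 r) := by
      have h1 : Tendsto (fun n : ℕ => Real.log D * (n:ℝ)⁻¹) atTop (𝓝 (Real.log D * 0)) :=
        tendsto_const_nhds.mul tendsto_inv_atTop_nhds_zero_nat
      have h2 : Tendsto (fun n : ℕ => Real.exp (Real.log D * (n:ℝ)⁻¹)) atTop (𝓝 1) := by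
        rw [show (1:ℝ) = Real.exp (Real.log D * 0) by simp]
        exact (Real.continuous_exp.tendsto _).comp h1
      have h3 : (fun n : ℕ => D ^ ((n:ℝ)⁻¹) * r)
          = fun n : ℕ => Real.exp (Real.log D * (n:ℝ)⁻¹) * r := by
        funext n
        rw [Real.rpow_def_of_pos hDpos]
      have h4 := h2.mul_const r
      rw [one_mul] at h4
      rwa [h3]
    have hfin : jointRad A K ≤ r := by
      refine ge_of_tendsto htendD ?_
      filter_upwards [eventually_ge_atTop 1] with n hn
      exact (jointRad_le_jointTerm ⟨n, hn⟩).trans (hjt ⟨n, hn⟩)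
    exact le_antisymm (genRad_le_jointRad hK hC hC₀) hfin
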